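/- Let G be an index coding instance on n ≥ 1 messages, q a positive integer, t = (t_1,…,t_n) a tuple of positive integers, j ∈ [n], and l ∈ [t_j]. Then the complement of the component confusion graph Γ_t^{(jl)}(G) has no chordless cycle of length greater than four: for every k ≥ 5 and every list of k pairwise distinct vertices v_1,…,v_k such that v_1 ∼ v_2, v_2 ∼ v_3, …, v_{k−1} ∼ v_k, and v_k ∼ v_1 in the complement graph, there exist indices a, b ∈ [k] that are not cyclically consecutive (b ≢ a±1 mod k and a ≠ b) with v_a adjacent to v_b in the complement graph. -/

import Mathlib

namespace IC

/-- Two message tuples (with `x_i ∈ {0,…,q−1}^{t_i}`) are confusable at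
position `l` of node `j` for the directed graph with edge relation `E`. -/
def ConfusableAt {n q : ℕ} (E : Fin n → Fin n → Prop) (t : Fin n → ℕ)
    (j : Fin n) (l : Fin (t j))
    (x z : ∀ i : Fin n, Fin (t i) → Fin q) : Prop :=
  x j l ≠ z j l ∧ ∀ i : Fin n, E i j → x i = z i

/-- The component confusion graph `Γ_t^{(jl)}(G)`. -/
def componentConfusionGraph {n : ℕ} (q : ℕ) (E : Fin n → Fin n → Prop) (t : Fin n → ℕ)
    (j : Fin n) (l : Fin (t j)) :
    SimpleGraph (∀ i : Fin n, Fin (t i) → Fin q) where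
  Adj x z := ConfusableAt E t j l x z
  symm := ⟨fun _ _ ⟨h1, h2⟩ => ⟨h1.symm, fun i hi => (h2 i hi).symm⟩⟩
  loopless := ⟨fun _ ⟨h1, _⟩ => h1 rfl⟩

/-- The confusion graph `Γ_t(G)`. -/
def confusionGraph {n : ℕ} (q : ℕ) (E : Fin n → Fin n → Prop) (t : Fin n → ℕ) :
    SimpleGraph (∀ i : Fin n, Fin (t i) → Fin q) where
  Adj x z := ∃ (j : Fin n) (l : Fin (t j)), ConfusableAt E t j l x z
  symm := ⟨fun _ _ ⟨j, l, h1, h2⟩ => ⟨j, l, h1.symm, fun i hi => (h2 i hi).symm⟩⟩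
  loopless := ⟨fun _ ⟨_, _, h1, _⟩ => h1 rfl⟩

end IC

/-- The complement of the component confusion graph
`Γ_t^{(jl)}(G)` has no chordless cycle of length greater than four: every cycle
on `k + 5` pairwise distinct vertices of the complement graph has a chord. -/
theorem compl_componentConfusionGraph_no_long_chordless_cycle
    (n q : ℕ) (hn : 1 ≤ n) (hq : 1 ≤ q)
    (E : Fin n → Fin n → Prop) (hE : ∀ i, ¬ E i i)
    (t : Fin n → ℕ) (ht : ∀ j, 1 ≤ t j)
    (j : Fin n) (l : Fin (t j)) :
    ∀ (k : ℕ) (v : Fin (k + 5) → (∀ i : Fin n, Fin (t i) → Fin q)),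
      Function.Injective v →
      (∀ i : Fin (k + 5),
        (IC.componentConfusionGraph q E t j l)ᶜ.Adj (v i) (v (i + 1))) →
      ∃ a b : Fin (k + 5), a ≠ b ∧ b ≠ a + 1 ∧ a ≠ b + 1 ∧
        (IC.componentConfusionGraph q E t j l)ᶜ.Adj (v a) (v b) := by
  intro k v hv hcyc
  letI : CommRing (Fin (k+5)) := Fin.instCommRing (k+5)
  by_contra hcon
  push_neg at hcon
  -- basic Fin arithmetic helper
  have hne : ∀ (a : Fin (k+5)) (c : ℕ), 0 < c → c < 5 → a ≠ a + (c : Fin (k+5)) := by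
    intro a c h1 h2 h
    have hc : ((c : Fin (k+5))) = 0 := by simpa using (left_eq_add.mp h)
    have h3 := congrArg Fin.val hc
    rw [Fin.val_natCast, Nat.mod_eq_of_lt (by omega)] at h3
    simp at h3
    omega
  have hne1 : ∀ a : Fin (k+5), a ≠ a + 1 := fun a => by
    simpa using hne a 1 (by omega) (by omega)
  have hne2 : ∀ a : Fin (k+5), a ≠ a + 2 := fun a => by
    simpa using hne a 2 (by omega) (by omega)
  have hne3 : ∀ a : Fin (k+5), a ≠ a + 3 := fun a => by
    simpa using hne a 3 (by omega) (by omega)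
  have hne4 : ∀ a : Fin (k+5), a ≠ a + 4 := fun a => by
    simpa using hne a 4 (by omega) (by omega)
  -- every non-consecutive pair must be confusable
  have adj : ∀ a b : Fin (k+5), a ≠ b → b ≠ a + 1 → a ≠ b + 1 →
      IC.ConfusableAt E t j l (v a) (v b) := by
    intro a b h1 h2 h3
    have h4 := hcon a b h1 h2 h3
    rw [SimpleGraph.compl_adj] at h4
    push_neg at h4
    have hvne : v a ≠ v b := fun he => h1 (hv he)
    exact (h4 hvne : (IC.componentConfusionGraph q E t j l).Adj (v a) (v b))
  -- chords (a, a+3) and (a+1, a+3)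
  have chordA : ∀ a : Fin (k+5), IC.ConfusableAt E t j l (v a) (v (a + 3)) := by
    intro a
    refine adj a (a + 3) (hne3 a) ?_ ?_
    · intro h
      exact hne2 (a + 1) (by rw [show a + 1 + 2 = a + 3 by ring, h])
    · intro h
      exact hne4 a (h.trans (by ring))
  have chordB : ∀ a : Fin (k+5), IC.ConfusableAt E t j l (v (a + 1)) (v (a + 3)) := by
    intro a
    refine adj (a + 1) (a + 3) ?_ ?_ ?_
    · intro h
      exact hne2 (a + 1) (by rw [show a + 1 + 2 = a + 3 by ring, ← h])
    · intro h
      exact hne1 (a + 2) (((show a + 2 = a + 1 + 1 by ring).trans h.symm).trans (by ring))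
    · intro h
      exact hne3 (a + 1) (h.trans (by ring))
  -- consecutive vertices agree on the side information
  have eqA : ∀ (a : Fin (k+5)) (i : Fin n), E i j → v a i = v (a + 1) i := by
    intro a i hi
    exact ((chordA a).2 i hi).trans ((chordB a).2 i hi).symm
  -- consecutive vertices have equal (j,l)-coordinate
  have eqjl : ∀ a : Fin (k+5), v a j l = v (a + 1) j l := by
    intro a
    have h4 := hcyc a
    rw [SimpleGraph.compl_adj] at h4
    by_contra hne'
    exact h4.2 (show IC.ConfusableAt E t j l _ _ from ⟨hne', fun i hi => eqA a i hi⟩)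
  -- but v 0 and v 2 must be confusable, contradicting equal (j,l)-coordinates
  have chord02 := adj 0 2 ?h1 ?h2 ?h3
  case h1 => simpa using hne2 0
  case h2 =>
    intro h
    exact hne1 1 (((show (1:Fin (k+5)) = 0 + 1 by ring).trans h.symm).trans (by ring))
  case h3 => simpa [show (2:Fin (k+5)) + 1 = 3 by ring] using hne3 0
  have e0 : v 0 j l = v 1 j l := by simpa using eqjl 0
  have e1 : v 1 j l = v 2 j l := by
    have := eqjl 1
    rwa [show (1:Fin (k+5)) + 1 = 2 by ring] at this
  exact chord02.1 (e0.trans e1)
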